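/- arXiv:1612.08261 — 2 statements merged into one kernel-verified Lean document; each statement's English description precedes it below -/
import Mathlib

section
/- For all real numbers λ, τ with 0 < λ < τ < 1: λ(1−τ) · ( ∫_0^λ (δ_τ(t) − (t/λ)·λ(1−τ))² dt + ∫_λ^1 (δ_τ(t) − ((1−t)/(1−λ))·λ(1−τ))² dt )^{−1/2} = √3 · λ · √(1−λ) / (τ−λ). -/
open MeasureTheory ProbabilityTheory Filter
open scoped ENNReal NNReal Classical

noncomputable section

/-- A function `L`, positive on `(0,∞)`, is slowly varying if `L(at)/L(t) → 1` as `t → ∞`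
for every `a > 0`. -/
def SlowlyVarying (L : ℝ → ℝ) : Prop :=
  (∀ t > 0, 0 < L t) ∧ ∀ a > 0, Tendsto (fun t => L (a * t) / L t) atTop (nhds 1)

/-- The standard normal density `φ`. -/
def stdNormalPDF (y : ℝ) : ℝ := (Real.sqrt (2 * Real.pi))⁻¹ * Real.exp (-(y ^ 2) / 2)

/-- The `q`-th probabilists' Hermite polynomial, evaluated at `y : ℝ`. -/
def hermiteEval (q : ℕ) (y : ℝ) : ℝ := (Polynomial.aeval y) (Polynomial.hermite q)

/-- `J_q(x) = ∫ 1_{{G(y) ≤ x}} H_q(y) φ(y) dy`. -/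
def Jfun (G : ℝ → ℝ) (q : ℕ) (x : ℝ) : ℝ :=
  ∫ y : ℝ, if G y ≤ x then hermiteEval q y * stdNormalPDF y else 0

/-- `g_{D,r}(t) = t^{rD/2} L(t)^{-r/2}`. -/
def gfun (L : ℝ → ℝ) (D : ℝ) (r : ℕ) (t : ℝ) : ℝ :=
  t ^ ((r : ℝ) * D / 2) * L t ^ (-(r : ℝ) / 2)

/-- `c_r = (2 r! /((1-Dr)(2-Dr)))^{1/2}`. -/
def cconst (D : ℝ) (r : ℕ) : ℝ :=
  Real.sqrt (2 * (Nat.factorial r : ℝ) / ((1 - D * r) * (2 - D * r)))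

/-- `d_{t,r} = c_r · t / g_{D,r}(t)`, for a real argument `t`. -/
def dReal (L : ℝ → ℝ) (D : ℝ) (r : ℕ) (t : ℝ) : ℝ := cconst D r * t / gfun L D r t

/-- `d_{n,r}`. -/
def dseq (L : ℝ → ℝ) (D : ℝ) (r : ℕ) (n : ℕ) : ℝ := dReal L D r n

/-- Assumption 1 of the paper: `(ξ_i)` is a stationary centered Gaussian process with unit
variance and regularly varying autocovariances (LRD parameter `D`), `Y_i = G(ξ_i)` has a
continuous distribution function, and the Hermite rank `r` of `1_{{G(ξ_i) ≤ x}} - F(x)`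
satisfies `0 < D < 1/r`.  Here `ξ` is indexed from `0`, i.e. `ξ 0` is `ξ_1`. -/
structure Assumption1 {Ω : Type*} [MeasurableSpace Ω] (P : Measure Ω)
    (ξ : ℕ → Ω → ℝ) (G : ℝ → ℝ) (L : ℝ → ℝ) (D : ℝ) (r : ℕ) : Prop where
  meas_xi : ∀ i, Measurable (ξ i)
  meas_G : Measurable G
  stationary : ∀ n i : ℕ,
    P.map (fun ω (j : Fin n) => ξ (i + (j : ℕ)) ω) = P.map (fun ω (j : Fin n) => ξ (j : ℕ) ω)
  gaussian : ∀ n : ℕ, ∀ l : (Fin n → ℝ) →L[ℝ] ℝ, ∃ s : ℝ≥0,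
    (P.map (fun ω (j : Fin n) => ξ (j : ℕ) ω)).map (fun v => l v) = gaussianReal 0 s
  variance_one : ∫ ω, ξ 0 ω ^ 2 ∂P = 1
  slowly_varying : SlowlyVarying L
  D_pos : 0 < D
  r_pos : 1 ≤ r
  D_lt : D < 1 / (r : ℝ)
  cov_asymp :
    Tendsto (fun k : ℕ => (∫ ω, ξ 0 ω * ξ k ω ∂P) / ((k : ℝ) ^ (-D) * L k)) atTop (nhds 1)
  hermite_rank_attained : ∃ x : ℝ, Jfun G r x ≠ 0
  hermite_rank_minimal : ∀ q : ℕ, 1 ≤ q → q < r → ∀ x : ℝ, Jfun G q x = 0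
  F_cont : Continuous fun x : ℝ => (P {ω | G (ξ 0 ω) ≤ x}).toReal

/-- The (marginal) distribution function `F` of `Y_1 = G(ξ_1)`. -/
def Fdist {Ω : Type*} [MeasurableSpace Ω] (P : Measure Ω) (ξ : ℕ → Ω → ℝ) (G : ℝ → ℝ)
    (x : ℝ) : ℝ := (P {ω | G (ξ 0 ω) ≤ x}).toReal

/-- The law of `Y_1 = G(ξ_1)`; integration against it is the Lebesgue–Stieltjes integral
with respect to `F`. -/
def Ydist {Ω : Type*} [MeasurableSpace Ω] (P : Measure Ω) (ξ : ℕ → Ω → ℝ) (G : ℝ → ℝ) :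
    Measure ℝ := P.map fun ω => G (ξ 0 ω)

/-- `F` has the bounded Lebesgue density `f`. -/
def HasBoundedDensity {Ω : Type*} [MeasurableSpace Ω] (P : Measure Ω) (ξ : ℕ → Ω → ℝ)
    (G : ℝ → ℝ) (f : ℝ → ℝ) : Prop :=
  Measurable f ∧ (∀ x, 0 ≤ f x) ∧ (∃ C : ℝ, ∀ x, f x ≤ C) ∧
    ∀ x, Fdist P ξ G x = ∫ t in Set.Iic x, f t

/-- The change point `k_0 = ⌊nτ⌋`. -/
def kzero (τ : ℝ) (n : ℕ) : ℕ := ⌊(n : ℝ) * τ⌋₊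

/-- The observations `X_i = μ + Y_i + h_n · 1_{{i > k_0}}`, with `Y_i = G(ξ_{i-1})` for
`i = 1, …, n` (`ξ` being indexed from `0`). -/
def Xobs {Ω : Type*} (ξ : ℕ → Ω → ℝ) (G : ℝ → ℝ) (μ : ℝ) (h : ℕ → ℝ) (τ : ℝ) (n : ℕ)
    (ω : Ω) (i : ℕ) : ℝ :=
  μ + G (ξ (i - 1) ω) + if kzero τ n < i then h n else 0

/-- The two-sample Wilcoxon statistic `W_{k,n}` of the data `x 1, …, x n`. -/
def Wstat (x : ℕ → ℝ) (n k : ℕ) : ℝ :=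
  ∑ i ∈ Finset.Icc 1 k, ∑ j ∈ Finset.Icc (k + 1) n,
    ((if x i ≤ x j then (1 : ℝ) else 0) - 1 / 2)

/-- The Wilcoxon change-point estimator: the smallest `k ∈ {1, …, n-1}` at which `|W_{k,n}|`
is maximal. -/
def kHatW (x : ℕ → ℝ) (n : ℕ) : ℕ :=
  WithTop.untopD 0 ((Finset.Icc 1 (n - 1)).filter fun k =>
    ∀ i ∈ Finset.Icc 1 (n - 1), |Wstat x n i| ≤ |Wstat x n k|).min

/-- The rank `R_i` of `x i` among `x 1, …, x n`. -/
def rankOf (x : ℕ → ℝ) (n i : ℕ) : ℝ :=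
  ∑ j ∈ Finset.Icc 1 n, if x j ≤ x i then (1 : ℝ) else 0

/-- `R̄_{j,k}`. -/
def rbar (x : ℕ → ℝ) (n j k : ℕ) : ℝ :=
  ((k : ℝ) - (j : ℝ) + 1)⁻¹ * ∑ t ∈ Finset.Icc j k, rankOf x n t

/-- `S_t(j,k)`. -/
def Scum (x : ℕ → ℝ) (n j k t : ℕ) : ℝ :=
  ∑ i ∈ Finset.Icc j t, (rankOf x n i - rbar x n j k)

/-- The self-normalized Wilcoxon statistic `SW_{k,n}`. -/
def SWstat (x : ℕ → ℝ) (n k : ℕ) : ℝ :=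
  (∑ i ∈ Finset.Icc 1 k, rankOf x n i -
      ((k : ℝ) / (n : ℝ)) * ∑ i ∈ Finset.Icc 1 n, rankOf x n i) /
    Real.sqrt ((1 / (n : ℝ)) * ∑ t ∈ Finset.Icc 1 k, Scum x n 1 k t ^ 2 +
      (1 / (n : ℝ)) * ∑ t ∈ Finset.Icc (k + 1) n, Scum x n (k + 1) n t ^ 2)

/-- The self-normalized Wilcoxon change-point estimator on `{k1, …, k2}`. -/
def kHatSW (x : ℕ → ℝ) (n k1 k2 : ℕ) : ℕ :=
  WithTop.untopD 0 ((Finset.Icc k1 k2).filter fun k =>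
    ∀ i ∈ Finset.Icc k1 k2, |SWstat x n i| ≤ |SWstat x n k|).min

/-- `δ_τ(λ)`. -/
def deltaTau (τ lam : ℝ) : ℝ := if lam ≤ τ then lam * (1 - τ) else (1 - lam) * τ

/-- Empirical distribution function `F_{j,m}` of `y_{j+1}, …, y_m`. -/
def empDF (y : ℕ → ℝ) (j m : ℕ) (x : ℝ) : ℝ :=
  ((m : ℝ) - (j : ℝ))⁻¹ * ∑ i ∈ Finset.Icc (j + 1) m, if y i ≤ x then (1 : ℝ) else 0

/-- The integral `∫ g dF_{j,m} = (m-j)⁻¹ ∑_{i=j+1}^m g(y_i)` with respect to the empirical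
distribution of `y_{j+1}, …, y_m`. -/
def empInt (y : ℕ → ℝ) (j m : ℕ) (g : ℝ → ℝ) : ℝ :=
  ((m : ℝ) - (j : ℝ))⁻¹ * ∑ i ∈ Finset.Icc (j + 1) m, g (y i)

/-- The process `Ṽ_n(s)` (with `k_0 + ⌊m_n s⌋` encoded as `((k_0 : ℤ) + ⌊mn * s⌋).toNat`). -/
def Vtilde (Y : ℕ → ℝ) (hn mn s : ℝ) (n k0 : ℕ) : ℝ :=
  if s < 0 then
    -(∑ i ∈ Finset.Icc (((k0 : ℤ) + ⌊mn * s⌋).toNat + 1) k0, ∑ j ∈ Finset.Icc (k0 + 1) n,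
      ((if Y i ≤ Y j + hn then (1 : ℝ) else 0) - (if Y i ≤ Y j then (1 : ℝ) else 0)))
  else
    -(∑ i ∈ Finset.Icc 1 k0, ∑ j ∈ Finset.Icc (k0 + 1) (((k0 : ℤ) + ⌊mn * s⌋).toNat),
      ((if Y i ≤ Y j + hn then (1 : ℝ) else 0) - (if Y i ≤ Y j then (1 : ℝ) else 0)))

/-- `h(s; τ)`, with `intf` standing for `∫ f²(x) dx`. -/
def hShift (τ intf s : ℝ) : ℝ := if s ≤ 0 then s * (1 - τ) * intf else -s * τ * intf

/-- The in-probability limit `V(λ)` of `|SW_{⌊nλ⌋,n}|` under a fixed change. -/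
def Vlimit (τ lam : ℝ) : ℝ :=
  |deltaTau τ lam| *
    ((∫ t in (0:ℝ)..lam, (deltaTau τ t - t / lam * deltaTau τ lam) ^ 2) +
      ∫ t in lam..(1:ℝ), (deltaTau τ t - (1 - t) / (1 - lam) * deltaTau τ lam) ^ 2) ^
      (-(1 / 2) : ℝ)


/-- For `0 < λ < τ < 1`, the (deterministic) limit of the self-normalized
Wilcoxon statistic at `λ ≤ τ` equals `√3 λ √(1-λ)/(τ-λ)`. -/
theorem sn_limit_value_left (lam τ : ℝ) (h0 : 0 < lam) (h1 : lam < τ) (h2 : τ < 1) :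
    lam * (1 - τ) *
      ((∫ t in (0:ℝ)..lam, (deltaTau τ t - t / lam * (lam * (1 - τ))) ^ 2) +
        ∫ t in lam..(1:ℝ), (deltaTau τ t - (1 - t) / (1 - lam) * (lam * (1 - τ))) ^ 2) ^
        (-(1 / 2) : ℝ) =
      Real.sqrt 3 * lam * Real.sqrt (1 - lam) / (τ - lam) := by
  have hlt : lam < (1:ℝ) := h1.trans h2
  have h1l : (0:ℝ) < 1 - lam := by linarith
  have h1t : (0:ℝ) < 1 - τ := by linarith
  have htl : (0:ℝ) < τ - lam := by linarith
  have hdmin : deltaTau τ = fun t => min (t * (1 - τ)) ((1 - t) * τ) := by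
    funext t
    unfold deltaTau
    rcases le_or_gt t τ with h | h
    · rw [if_pos h, min_eq_left (by nlinarith)]
    · rw [if_neg h.not_ge, min_eq_right (by nlinarith)]
  have hcont : Continuous (deltaTau τ) := by
    rw [hdmin]
    exact Continuous.min (continuous_id.mul continuous_const)
      ((continuous_const.sub continuous_id).mul continuous_const)
  have hd1 : ∀ t : ℝ, t ≤ τ → deltaTau τ t = t * (1 - τ) := fun t ht => if_pos ht
  have hd2 : ∀ t : ℝ, τ ≤ t → deltaTau τ t = (1 - t) * τ := by
    intro t ht
    unfold deltaTau
    split_ifs with h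
    · have : t = τ := le_antisymm h ht
      subst this; ring
    · rfl
  -- first integral is zero
  have e1 : (∫ t in (0:ℝ)..lam, (deltaTau τ t - t / lam * (lam * (1 - τ))) ^ 2) = 0 := by
    have heq : Set.EqOn (fun t => (deltaTau τ t - t / lam * (lam * (1 - τ))) ^ 2)
        (fun _ => (0:ℝ)) (Set.uIcc 0 lam) := by
      intro t ht
      rw [Set.uIcc_of_le h0.le] at ht
      simp only
      rw [hd1 t (ht.2.trans h1.le)]
      field_simp
      ring
    rw [intervalIntegral.integral_congr heq, intervalIntegral.integral_zero]
  -- split the second integral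
  have hc : Continuous (fun t => (deltaTau τ t - (1 - t) / (1 - lam) * (lam * (1 - τ))) ^ 2) :=
    (hcont.sub (((continuous_const.sub continuous_id).div_const _).mul continuous_const)).pow 2
  have hi1 : IntervalIntegrable
      (fun t => (deltaTau τ t - (1 - t) / (1 - lam) * (lam * (1 - τ))) ^ 2) volume lam τ :=
    hc.intervalIntegrable _ _
  have hi2 : IntervalIntegrable
      (fun t => (deltaTau τ t - (1 - t) / (1 - lam) * (lam * (1 - τ))) ^ 2) volume τ 1 :=
    hc.intervalIntegrable _ _
  have esplit : (∫ t in lam..(1:ℝ), (deltaTau τ t - (1 - t) / (1 - lam) * (lam * (1 - τ))) ^ 2)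
      = (∫ t in lam..τ, (deltaTau τ t - (1 - t) / (1 - lam) * (lam * (1 - τ))) ^ 2)
      + ∫ t in τ..(1:ℝ), (deltaTau τ t - (1 - t) / (1 - lam) * (lam * (1 - τ))) ^ 2 :=
    (intervalIntegral.integral_add_adjacent_intervals hi1 hi2).symm
  -- middle piece
  have em : (∫ t in lam..τ, (deltaTau τ t - (1 - t) / (1 - lam) * (lam * (1 - τ))) ^ 2)
      = ((1 - τ) / (1 - lam)) ^ 2 * ((τ - lam) ^ 3 / 3) := by
    have heq : Set.EqOn (fun t => (deltaTau τ t - (1 - t) / (1 - lam) * (lam * (1 - τ))) ^ 2)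
        (fun t => ((1 - τ) / (1 - lam)) ^ 2 * (t - lam) ^ 2) (Set.uIcc lam τ) := by
      intro t ht
      rw [Set.uIcc_of_le h1.le] at ht
      simp only
      rw [hd1 t ht.2]
      field_simp
      ring
    rw [intervalIntegral.integral_congr heq, intervalIntegral.integral_const_mul]
    congr 1
    rw [intervalIntegral.integral_comp_sub_right (fun t => t ^ 2) lam, integral_pow]
    norm_num
  -- last piece
  have er : (∫ t in τ..(1:ℝ), (deltaTau τ t - (1 - t) / (1 - lam) * (lam * (1 - τ))) ^ 2)
      = ((τ - lam) / (1 - lam)) ^ 2 * ((1 - τ) ^ 3 / 3) := by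
    have heq : Set.EqOn (fun t => (deltaTau τ t - (1 - t) / (1 - lam) * (lam * (1 - τ))) ^ 2)
        (fun t => ((τ - lam) / (1 - lam)) ^ 2 * (t - 1) ^ 2) (Set.uIcc τ 1) := by
      intro t ht
      rw [Set.uIcc_of_le h2.le] at ht
      simp only
      rw [hd2 t ht.1]
      field_simp
      ring
    rw [intervalIntegral.integral_congr heq, intervalIntegral.integral_const_mul]
    congr 1
    rw [intervalIntegral.integral_comp_sub_right (fun t => t ^ 2) 1, integral_pow]
    ring_nf
  have hIeq : (∫ t in (0:ℝ)..lam, (deltaTau τ t - t / lam * (lam * (1 - τ))) ^ 2)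
      + (∫ t in lam..(1:ℝ), (deltaTau τ t - (1 - t) / (1 - lam) * (lam * (1 - τ))) ^ 2)
      = ((1 - τ) * (τ - lam)) ^ 2 / (3 * (1 - lam)) := by
    rw [e1, esplit, em, er]
    field_simp
    ring
  rw [hIeq]
  have hA : (0:ℝ) < (1 - τ) * (τ - lam) := mul_pos h1t htl
  have hs3 : (0:ℝ) < Real.sqrt 3 * Real.sqrt (1 - lam) :=
    mul_pos (Real.sqrt_pos.mpr (by norm_num)) (Real.sqrt_pos.mpr h1l)
  have hsq : (Real.sqrt 3 * Real.sqrt (1 - lam)) ^ 2 = 3 * (1 - lam) := by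
    rw [mul_pow, Real.sq_sqrt (by norm_num), Real.sq_sqrt h1l.le]
  have hrw : ((1 - τ) * (τ - lam)) ^ 2 / (3 * (1 - lam))
      = (((1 - τ) * (τ - lam)) / (Real.sqrt 3 * Real.sqrt (1 - lam))) ^ 2 := by
    rw [div_pow, hsq]
  rw [hrw]
  rw [show (-(1 / 2) : ℝ) = -(1/2) from rfl,
    Real.rpow_neg (by positivity), ← Real.sqrt_eq_rpow,
    Real.sqrt_sq (by positivity), inv_div]
  field_simp
end
end

section
/- For all real numbers λ, τ with 0 < τ < λ < 1: (1−λ)τ · ( ∫_0^λ (δ_τ(t) − (t/λ)·(1−λ)τ)² dt + ∫_λ^1 (δ_τ(t) − ((1−t)/(1−λ))·(1−λ)τ)² dt )^{−1/2} = √3 · √λ · (1−λ) / (λ−τ). -/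
open MeasureTheory ProbabilityTheory Filter
open scoped ENNReal NNReal Classical

noncomputable section

/-- FTC helper: integral of a squared linear function. -/
lemma int_sq_lin (c e a b : ℝ) :
    ∫ t in a..b, (c * (t - e)) ^ 2 = c ^ 2 * ((b - e) ^ 3 - (a - e) ^ 3) / 3 := by
  have h : ∀ x ∈ Set.uIcc a b, HasDerivAt (fun t => c ^ 2 * (t - e) ^ 3 / 3)
      ((c * (x - e)) ^ 2) x := by
    intro x _
    have h1 : HasDerivAt (fun t : ℝ => (t - e) ^ 3) (3 * (x - e) ^ 2 * 1) x :=
      ((hasDerivAt_id x).sub_const e).pow 3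
    have h2 := (h1.const_mul (c ^ 2)).div_const 3
    refine h2.congr_deriv ?_
    ring
  have hcont : IntervalIntegrable (fun x => (c * (x - e)) ^ 2) MeasureTheory.volume a b :=
    (Continuous.intervalIntegrable (by continuity) a b)
  have := intervalIntegral.integral_eq_sub_of_hasDerivAt h hcont
  rw [this]; ring

/-- For `0 < τ < λ < 1`, the (deterministic) limit of the self-normalized
Wilcoxon statistic at `λ ≥ τ` equals `√3 √λ (1-λ)/(λ-τ)`. -/
theorem sn_limit_value_right (lam τ : ℝ) (h0 : 0 < τ) (h1 : τ < lam) (h2 : lam < 1) :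
    (1 - lam) * τ *
      ((∫ t in (0:ℝ)..lam, (deltaTau τ t - t / lam * ((1 - lam) * τ)) ^ 2) +
        ∫ t in lam..(1:ℝ), (deltaTau τ t - (1 - t) / (1 - lam) * ((1 - lam) * τ)) ^ 2) ^
        (-(1 / 2) : ℝ) =
      Real.sqrt 3 * Real.sqrt lam * (1 - lam) / (lam - τ) := by
  have hlam : 0 < lam := h0.trans h1
  have hlamne : lam ≠ 0 := ne_of_gt hlam
  have h1lam : (0:ℝ) < 1 - lam := by linarith
  -- second integral is zero
  have hI2 : (∫ t in lam..(1:ℝ), (deltaTau τ t - (1 - t) / (1 - lam) * ((1 - lam) * τ)) ^ 2) = 0 := by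
    have heq : Set.EqOn (fun t => (deltaTau τ t - (1 - t) / (1 - lam) * ((1 - lam) * τ)) ^ 2)
        (fun _ => (0:ℝ)) (Set.uIcc lam 1) := by
      intro t ht
      rw [Set.uIcc_of_le (le_of_lt h2)] at ht
      have htl : lam ≤ t := ht.1
      have : ¬ t ≤ τ := by linarith
      simp only [deltaTau, if_neg this]
      field_simp
      ring
    rw [intervalIntegral.integral_congr heq, intervalIntegral.integral_const, smul_zero]
  -- first integral split at τ
  have hcont : Continuous (deltaTau τ) := by
    have : deltaTau τ = fun t => min (t * (1 - τ)) ((1 - t) * τ) := by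
      funext t
      rcases le_or_gt t τ with h | h
      · rw [deltaTau, if_pos h, min_eq_left]; nlinarith
      · rw [deltaTau, if_neg (not_le.mpr h), min_eq_right]; nlinarith
    rw [this]; continuity
  have hintg : ∀ a b : ℝ, IntervalIntegrable
      (fun t => (deltaTau τ t - t / lam * ((1 - lam) * τ)) ^ 2) MeasureTheory.volume a b := by
    intro a b
    apply Continuous.intervalIntegrable
    fun_prop
  have hsplit : (∫ t in (0:ℝ)..lam, (deltaTau τ t - t / lam * ((1 - lam) * τ)) ^ 2)
      = (∫ t in (0:ℝ)..τ, (deltaTau τ t - t / lam * ((1 - lam) * τ)) ^ 2)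
        + ∫ t in τ..lam, (deltaTau τ t - t / lam * ((1 - lam) * τ)) ^ 2 :=
    (intervalIntegral.integral_add_adjacent_intervals (hintg 0 τ) (hintg τ lam)).symm
  have hA : (∫ t in (0:ℝ)..τ, (deltaTau τ t - t / lam * ((1 - lam) * τ)) ^ 2)
      = ((lam - τ) / lam) ^ 2 * ((τ - 0) ^ 3 - (0 - 0) ^ 3) / 3 := by
    rw [← int_sq_lin ((lam - τ) / lam) 0 0 τ]
    apply intervalIntegral.integral_congr
    intro t ht
    rw [Set.uIcc_of_le (le_of_lt h0)] at ht
    simp only [deltaTau, if_pos ht.2]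
    field_simp
    ring
  have hB : (∫ t in τ..lam, (deltaTau τ t - t / lam * ((1 - lam) * τ)) ^ 2)
      = (τ / lam) ^ 2 * ((lam - lam) ^ 3 - (τ - lam) ^ 3) / 3 := by
    rw [← int_sq_lin (τ / lam) lam τ lam]
    apply intervalIntegral.integral_congr
    intro t ht
    rw [Set.uIcc_of_le (le_of_lt h1)] at ht
    rcases eq_or_lt_of_le ht.1 with h | h
    · simp only [deltaTau, ← h, if_pos le_rfl]
      field_simp; ring
    · simp only [deltaTau, if_neg (not_le.mpr h)]
      field_simp; ring
  have hS : (∫ t in (0:ℝ)..lam, (deltaTau τ t - t / lam * ((1 - lam) * τ)) ^ 2)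
      + (∫ t in lam..(1:ℝ), (deltaTau τ t - (1 - t) / (1 - lam) * ((1 - lam) * τ)) ^ 2)
      = (τ * (lam - τ)) ^ 2 / (3 * lam) := by
    rw [hI2, hsplit, hA, hB]
    field_simp
    ring
  rw [hS]
  have hlt : (0:ℝ) < lam - τ := by linarith
  have hpos : (0:ℝ) < (τ * (lam - τ)) ^ 2 / (3 * lam) :=
    div_pos (pow_pos (mul_pos h0 hlt) 2) (by linarith)
  rw [Real.rpow_neg (le_of_lt hpos), ← Real.sqrt_eq_rpow, Real.sqrt_div (sq_nonneg _),
    Real.sqrt_sq (le_of_lt (mul_pos h0 hlt)), Real.sqrt_mul (by norm_num : (0:ℝ) ≤ 3)]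
  rw [inv_div]
  have hs3 : (0:ℝ) < Real.sqrt 3 := Real.sqrt_pos.mpr (by norm_num)
  have hsl : (0:ℝ) < Real.sqrt lam := Real.sqrt_pos.mpr hlam
  field_simp
end
end
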